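/- arXiv:1401.0001 — 3 statements merged into one kernel-verified Lean document; each statement's English description precedes it below -/
import Mathlib

section
/- Let C₁ and C₂ be conic hulls of finite sets of nonzero vectors in ℝ^d whose open dual cones are both nonempty. Then C₁ ⊆ C₂ if and only if C₂^⊥ ⊆ C₁^⊥, where C^⊥ = {w : ⟨w, v⟩ < 0 for all v ∈ C, v ≠ 0}. -/
open Finset

/-- Conic Carathéodory: any nonnegative combination supported on `s` can be rewritten as a
nonnegative combination supported on a subset whose vectors are linearly independent. -/
lemma cone_cara {E : Type*} [AddCommGroup E] [Module ℝ E] {m : ℕ} (u : Fin m → E) :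
    ∀ (s : Finset (Fin m)) (β : Fin m → ℝ), (∀ j, 0 ≤ β j) → (∀ j ∉ s, β j = 0) →
    ∃ (t : Finset (Fin m)) (γ : Fin m → ℝ),
      LinearIndependent ℝ (fun j : t => u j) ∧ (∀ j, 0 ≤ γ j) ∧ (∀ j ∉ t, γ j = 0) ∧
      ∑ j, γ j • u j = ∑ j, β j • u j := by
  intro s
  induction s using Finset.strongInduction with
  | _ s ih =>
    intro β hβ hsupp
    by_cases hind : LinearIndependent ℝ (fun j : s => u j)
    · exact ⟨s, β, hind, hβ, hsupp, rfl⟩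
    · obtain ⟨g, hg, i0, hi0⟩ := Fintype.not_linearIndependent_iff.mp hind
      have hexists : ∃ c : Fin m → ℝ,
          (∀ j ∉ s, c j = 0) ∧ (∑ j, c j • u j = 0) ∧ ∃ j, 0 < c j := by
        set c : Fin m → ℝ := fun j => if h : j ∈ s then g ⟨j, h⟩ else 0 with hc
        have hcsupp : ∀ j ∉ s, c j = 0 := fun j hj => dif_neg hj
        have hcsum : ∑ j, c j • u j = 0 := by
          rw [← Finset.sum_subset s.subset_univ (fun j _ hj => by rw [hcsupp j hj, zero_smul])]
          rw [← Finset.sum_coe_sort s (fun j => c j • u j)]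
          calc ∑ i : s, c ↑i • u ↑i = ∑ i : s, g i • u ↑i := by
                refine Finset.sum_congr rfl fun i _ => ?_
                simp [hc]
            _ = 0 := hg
        rcases lt_or_gt_of_ne hi0 with h | h
        · refine ⟨-c, fun j hj => by simp [hcsupp j hj], ?_, ⟨i0, ?_⟩⟩
          · simp only [Pi.neg_apply, neg_smul, Finset.sum_neg_distrib, hcsum, neg_zero]
          · simp only [Pi.neg_apply, hc, dif_pos i0.2, Subtype.coe_eta]
            linarith
        · exact ⟨c, hcsupp, hcsum, ⟨i0, by simp only [hc, dif_pos i0.2, Subtype.coe_eta]; exact h⟩⟩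
      obtain ⟨c, hcsupp, hcsum, j1, hj1⟩ := hexists
      have hj1s : j1 ∈ s := by by_contra h; rw [hcsupp j1 h] at hj1; exact lt_irrefl 0 hj1
      set T := s.filter (fun j => 0 < c j) with hT
      have hTne : T.Nonempty := ⟨j1, Finset.mem_filter.mpr ⟨hj1s, hj1⟩⟩
      obtain ⟨j₀, hj₀T, hmin⟩ := Finset.exists_min_image T (fun j => β j / c j) hTne
      have hj₀s : j₀ ∈ s := (Finset.mem_filter.mp hj₀T).1
      have hcj₀ : 0 < c j₀ := (Finset.mem_filter.mp hj₀T).2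
      set t₀ := β j₀ / c j₀ with ht₀def
      have ht₀ : 0 ≤ t₀ := div_nonneg (hβ j₀) hcj₀.le
      set β' : Fin m → ℝ := fun j => β j - t₀ * c j with hβ'
      have hβ'nonneg : ∀ j, 0 ≤ β' j := by
        intro j
        by_cases h : 0 < c j
        · have hjs : j ∈ s := by
            by_contra hj; rw [hcsupp j hj] at h; exact lt_irrefl 0 h
          have hle := hmin j (Finset.mem_filter.mpr ⟨hjs, h⟩)
          have : t₀ * c j ≤ β j := by
            rw [ht₀def]
            calc β j₀ / c j₀ * c j ≤ β j / c j * c j := by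
                  exact mul_le_mul_of_nonneg_right hle h.le
              _ = β j := div_mul_cancel₀ _ (ne_of_gt h)
          simp only [hβ']; linarith
        · push_neg at h
          have : t₀ * c j ≤ 0 := mul_nonpos_of_nonneg_of_nonpos ht₀ h
          simp only [hβ']; linarith [hβ j]
      have hβ'supp : ∀ j ∉ s.erase j₀, β' j = 0 := by
        intro j hj
        by_cases h : j = j₀
        · subst h
          simp only [hβ', ht₀def]
          rw [div_mul_cancel₀ _ (ne_of_gt hcj₀)]
          ring
        · have hjs : j ∉ s := fun hjs => hj (Finset.mem_erase.mpr ⟨h, hjs⟩)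
          simp only [hβ', hsupp j hjs, hcsupp j hjs]; ring
      have hsum' : ∑ j, β' j • u j = ∑ j, β j • u j := by
        simp only [hβ', sub_smul, mul_smul]
        rw [Finset.sum_sub_distrib, ← Finset.smul_sum, hcsum, smul_zero, sub_zero]
      obtain ⟨t, γ, h1, h2, h3, h4⟩ :=
        ih (s.erase j₀) (Finset.erase_ssubset hj₀s) β' hβ'nonneg hβ'supp
      exact ⟨t, γ, h1, h2, h3, h4.trans hsum'⟩

/-- The conic hull of a finite family in a finite-dimensional inner product space is closed. -/
lemma cone_isClosed {d m : ℕ} (u : Fin m → EuclideanSpace ℝ (Fin d)) :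
    IsClosed {x : EuclideanSpace ℝ (Fin d) |
      ∃ β : Fin m → ℝ, (∀ j, 0 ≤ β j) ∧ x = ∑ j, β j • u j} := by
  have key : {x : EuclideanSpace ℝ (Fin d) |
      ∃ β : Fin m → ℝ, (∀ j, 0 ≤ β j) ∧ x = ∑ j, β j • u j} =
      ⋃ (t : Finset (Fin m)) (_ : LinearIndependent ℝ fun j : t => u j),
        (fun γ : t → ℝ => ∑ j : t, γ j • u ↑j) '' {γ | ∀ j, 0 ≤ γ j} := by
    ext x
    simp only [Set.mem_setOf_eq, Set.mem_iUnion, Set.mem_image]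
    constructor
    · rintro ⟨β, hβ, rfl⟩
      obtain ⟨t, γ, h1, h2, h3, h4⟩ := cone_cara u Finset.univ β hβ (by simp)
      refine ⟨t, h1, fun j : t => γ ↑j, fun j => h2 ↑j, ?_⟩
      rw [← h4, Finset.sum_coe_sort t (fun j => γ j • u j)]
      exact Finset.sum_subset t.subset_univ (fun j _ hj => by rw [h3 j hj, zero_smul])
    · rintro ⟨t, hind, γ, hγ, rfl⟩
      refine ⟨fun j => if h : j ∈ t then γ ⟨j, h⟩ else 0, fun j => ?_, ?_⟩
      · by_cases h : j ∈ t
        · simpa [dif_pos h] using hγ ⟨j, h⟩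
        · simp [dif_neg h]
      · rw [← Finset.sum_subset t.subset_univ
          (fun j _ hj => by simp [hj]),
          ← Finset.sum_coe_sort t]
        refine (Finset.sum_congr rfl fun i _ => ?_).symm
        simp
  rw [key]
  refine isClosed_iUnion_of_finite fun t => isClosed_iUnion_of_finite fun hind => ?_
  set L : (t → ℝ) →ₗ[ℝ] EuclideanSpace ℝ (Fin d) :=
    { toFun := fun γ => ∑ j : t, γ j • u ↑j
      map_add' := fun γ₁ γ₂ => by simp [add_smul, Finset.sum_add_distrib]
      map_smul' := fun r γ => by simp [mul_smul, Finset.smul_sum] } with hL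
  have hker : LinearMap.ker L = ⊥ := by
    rw [LinearMap.ker_eq_bot']
    intro γ hγ
    exact funext (Fintype.linearIndependent_iff.mp hind γ hγ)
  have hce := LinearMap.isClosedEmbedding_of_injective hker
  have horth : IsClosed {γ : t → ℝ | ∀ j, 0 ≤ γ j} := by
    have : {γ : t → ℝ | ∀ j, 0 ≤ γ j} = ⋂ j, {γ : t → ℝ | 0 ≤ γ j} := by
      ext γ; simp [Set.mem_iInter]
    rw [this]
    exact isClosed_iInter fun j => isClosed_Ici.preimage (continuous_apply j)
  exact hce.isClosedMap _ horth

theorem stmt_8 (d n m : ℕ)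
    (v : Fin n → EuclideanSpace ℝ (Fin d)) (u : Fin m → EuclideanSpace ℝ (Fin d))
    (hv : ∀ i, v i ≠ 0) (hu : ∀ j, u j ≠ 0)
    (C₁ C₂ D₁ D₂ : Set (EuclideanSpace ℝ (Fin d)))
    (hC₁ : C₁ = {x | ∃ α : Fin n → ℝ, (∀ i, 0 ≤ α i) ∧ x = ∑ i, α i • v i})
    (hC₂ : C₂ = {x | ∃ β : Fin m → ℝ, (∀ j, 0 ≤ β j) ∧ x = ∑ j, β j • u j})
    (hD₁ : D₁ = {w | ∀ x ∈ C₁, x ≠ 0 → (inner ℝ w x : ℝ) < 0})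
    (hD₂ : D₂ = {w | ∀ x ∈ C₂, x ≠ 0 → (inner ℝ w x : ℝ) < 0})
    (hD₁ne : D₁.Nonempty) (hD₂ne : D₂.Nonempty) :
    C₁ ⊆ C₂ ↔ D₂ ⊆ D₁ := by
  constructor
  · intro hsub w hw
    rw [hD₂] at hw
    rw [hD₁]
    exact fun x hx hx0 => hw x (hsub hx) hx0
  · intro hsub x hx
    by_contra hxC₂
    -- C₂ as a convex cone
    set K : ConvexCone ℝ (EuclideanSpace ℝ (Fin d)) :=
      { carrier := C₂
        smul_mem' := by
          rintro c hc y hy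
          rw [hC₂] at hy ⊢
          obtain ⟨β, hβ, rfl⟩ := hy
          exact ⟨fun j => c * β j, fun j => mul_nonneg hc.le (hβ j),
            by simp [Finset.smul_sum, mul_smul]⟩
        add_mem' := by
          rintro y hy z hz
          rw [hC₂] at hy hz ⊢
          obtain ⟨β₁, hβ₁, rfl⟩ := hy
          obtain ⟨β₂, hβ₂, rfl⟩ := hz
          exact ⟨fun j => β₁ j + β₂ j, fun j => add_nonneg (hβ₁ j) (hβ₂ j),
            by simp [add_smul, Finset.sum_add_distrib]⟩ } with hK
    have hKne : (K : Set (EuclideanSpace ℝ (Fin d))).Nonempty := by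
      refine ⟨0, ?_⟩
      show (0 : EuclideanSpace ℝ (Fin d)) ∈ C₂
      rw [hC₂]
      exact ⟨0, fun j => le_refl 0, by simp⟩
    have hKcl : IsClosed (K : Set (EuclideanSpace ℝ (Fin d))) := by
      show IsClosed C₂
      rw [hC₂]; exact cone_isClosed u
    obtain ⟨y, hy1, hy2⟩ :=
      ProperCone.hyperplane_separation' (⟨K.toPointedCone (by
        show (0 : EuclideanSpace ℝ (Fin d)) ∈ C₂
        rw [hC₂]
        exact ⟨0, fun j => le_refl 0, by simp⟩), hKcl⟩ : ProperCone ℝ (EuclideanSpace ℝ (Fin d))) hxC₂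
    -- set w = -y: ⟪w, z⟫ ≤ 0 on C₂, ⟪w, x⟫ > 0
    obtain ⟨w₀, hw₀⟩ := hD₂ne
    rw [hD₂] at hw₀
    have hx0 : x ≠ 0 := by
      intro h
      rw [h] at hy2
      simp at hy2
    have hwx : (0:ℝ) < inner ℝ (-y) x := by
      rw [inner_neg_left]; linarith [real_inner_comm x y]
    set ε : ℝ := (inner ℝ (-y) x : ℝ) / (2 * (|(inner ℝ w₀ x : ℝ)| + 1)) with hε
    have hden : (0:ℝ) < 2 * (|(inner ℝ w₀ x : ℝ)| + 1) := by positivity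
    have hεpos : 0 < ε := div_pos hwx hden
    set w : EuclideanSpace ℝ (Fin d) := -y + ε • w₀ with hw
    have hwD₂ : w ∈ D₂ := by
      rw [hD₂]
      intro z hz hz0
      have hzK : z ∈ (K : Set (EuclideanSpace ℝ (Fin d))) := hz
      have h1 : (0:ℝ) ≤ inner ℝ z y := hy1 z hzK
      have h2 : (inner ℝ w₀ z : ℝ) < 0 := hw₀ z hz hz0
      rw [hw, inner_add_left, inner_neg_left, real_inner_smul_left]
      have : (inner ℝ y z : ℝ) = inner ℝ z y := real_inner_comm z y
      rw [this]
      have : ε * (inner ℝ w₀ z : ℝ) < 0 := mul_neg_of_pos_of_neg hεpos h2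
      linarith
    have hwD₁ : w ∈ D₁ := hsub hwD₂
    rw [hD₁] at hwD₁
    have hcon : (inner ℝ w x : ℝ) < 0 := hwD₁ x hx hx0
    have hεbound : ε * |(inner ℝ w₀ x : ℝ)| < (inner ℝ (-y) x : ℝ) := by
      rw [hε, div_mul_eq_mul_div, div_lt_iff₀ hden]
      have habs : (0:ℝ) ≤ |(inner ℝ w₀ x : ℝ)| := abs_nonneg _
      nlinarith
    have hwxpos : (0:ℝ) < inner ℝ w x := by
      rw [hw, inner_add_left, real_inner_smul_left]
      have : -(ε * |(inner ℝ w₀ x : ℝ)|) ≤ ε * (inner ℝ w₀ x : ℝ) := by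
        have := neg_abs_le (inner ℝ w₀ x : ℝ)
        nlinarith
      linarith
    linarith
end

section
/- In the parametrized game with payoffs (T,L) → (1,4), (T,R) → (4−θ,1), (B,L) → (2,2), (B,R) → (3,3) and 0 ≤ θ < 1, the row player's expected utility at the mixed equilibrium (p_T = 1/4, p_L = (1−θ)/(2−θ)) equals V_row(θ) = (5 − 2θ)/(2 − θ), and dV_row/dθ = 1/(2−θ)² > 0, while the column player's equilibrium expected utility equals 5/2 independently of θ. -/
def Urow (θ p q : ℝ) : ℝ :=
  p * q * 1 + p * (1 - q) * (4 - θ) + (1 - p) * q * 2 + (1 - p) * (1 - q) * 3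

def Ucol (p q : ℝ) : ℝ :=
  p * q * 4 + p * (1 - q) * 1 + (1 - p) * q * 2 + (1 - p) * (1 - q) * 3

theorem stmt_11 (θ : ℝ) (hθ0 : 0 ≤ θ) (hθ1 : θ < 1) :
    Urow θ (1/4) ((1 - θ) / (2 - θ)) = (5 - 2 * θ) / (2 - θ) ∧
    HasDerivAt (fun t : ℝ => (5 - 2 * t) / (2 - t)) (1 / (2 - θ)^2) θ ∧
    (0 : ℝ) < 1 / (2 - θ)^2 ∧
    Ucol (1/4) ((1 - θ) / (2 - θ)) = 5 / 2 := by
  have hne : (2 : ℝ) - θ ≠ 0 := by linarith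
  refine ⟨?_, ?_, ?_, ?_⟩
  · unfold Urow; field_simp; ring
  · have h1 : HasDerivAt (fun t : ℝ => 5 - 2 * t) (-2) θ := by
      simpa using ((hasDerivAt_id θ).const_mul (2:ℝ)).const_sub 5
    have h2 : HasDerivAt (fun t : ℝ => 2 - t) (-1) θ := by
      simpa using (hasDerivAt_id θ).const_sub 2
    have : HasDerivAt (fun t : ℝ => (5 - 2 * t) / (2 - t)) _ θ := h1.div h2 hne
    convert this using 1
    ring
  · positivity
  · unfold Ucol; field_simp; ring
end

section
/- Let v₁, …, vₙ, u be nonzero vectors in ℝ^d such that the open dual cone C^⊥ = {w : ⟨w,vᵢ⟩ < 0 ∀i} of C = Con({vᵢ}) is nonempty. Then −u ∉ C if and only if there exists w with ⟨w, vᵢ⟩ > 0 for all i and ⟨w, u⟩ > 0. -/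
theorem stmt_16 (d n : ℕ) (v : Fin n → EuclideanSpace ℝ (Fin d)) (u : EuclideanSpace ℝ (Fin d))
    (hv : ∀ i, v i ≠ 0) (hu : u ≠ 0)
    (hdual : ∃ w₀ : EuclideanSpace ℝ (Fin d), ∀ i, (inner ℝ w₀ (v i) : ℝ) < 0) :
    (¬ ∃ α : Fin n → ℝ, (∀ i, 0 ≤ α i) ∧ -u = ∑ i, α i • v i) ↔
      ∃ w : EuclideanSpace ℝ (Fin d),
        (∀ i, (0 : ℝ) < inner ℝ w (v i)) ∧ (0 : ℝ) < inner ℝ w u := by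
  obtain ⟨w₀, hw₀⟩ := hdual
  constructor
  · intro hnot
    -- consider the convex hull of {v i} ∪ {u}
    set g : Fin (n + 1) → EuclideanSpace ℝ (Fin d) := Fin.snoc v u with hg
    have h0 : (0 : EuclideanSpace ℝ (Fin d)) ∉ convexHull ℝ (Set.range g) := by
      intro h0
      rw [convexHull_range_eq_exists_affineCombination] at h0
      obtain ⟨s, wt, hwt₀, hwt₁, hwt⟩ := h0
      rw [Finset.affineCombination_eq_linear_combination s g wt hwt₁] at hwt
      -- extend weights to all of Fin (n+1)
      set W : Fin (n + 1) → ℝ := fun i => if i ∈ s then wt i else 0 with hW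
      have hW₀ : ∀ i, 0 ≤ W i := by
        intro i; simp only [hW]; split
        · exact hwt₀ _ ‹_›
        · exact le_rfl
      have hWsum : ∑ i, W i = 1 := by
        rw [hW, Finset.sum_ite_mem, Finset.univ_inter, hwt₁]
      have hWcomb : ∑ i, W i • g i = 0 := by
        rw [← hwt,
          ← Finset.sum_subset (Finset.subset_univ s) (fun x _ hx => by simp [hW, hx])]
        exact Finset.sum_congr rfl fun i hi => by simp [hW, hi]
      rw [Fin.sum_univ_castSucc] at hWcomb hWsum
      simp only [hg, Fin.snoc_castSucc, Fin.snoc_last] at hWcomb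
      set γ := W (Fin.last n) with hγ
      rcases lt_or_eq_of_le (hW₀ (Fin.last n)) with hγpos | hγ0
      · -- γ > 0 : -u is a conic combination
        apply hnot
        refine ⟨fun i => W i.castSucc / γ, fun i => div_nonneg (hW₀ _) hγpos.le, ?_⟩
        have : γ • u = -∑ i, W i.castSucc • v i := by
          rw [eq_neg_iff_add_eq_zero, add_comm]; exact hWcomb
        have hu' : u = -(γ⁻¹ • ∑ i, W i.castSucc • v i) := by
          rw [← smul_neg, ← this, smul_smul, inv_mul_cancel₀ hγpos.ne', one_smul]
        rw [hu', neg_neg, Finset.smul_sum]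
        exact Finset.sum_congr rfl fun i _ => by
          simp only [smul_smul, div_eq_inv_mul]
      · -- γ = 0 : contradiction with w₀
        rw [hγ, ← hγ0] at hWsum hWcomb
        simp only [zero_smul, add_zero] at hWcomb hWsum
        have hinner : (0 : ℝ) = ∑ i, W i.castSucc * (inner ℝ w₀ (v i) : ℝ) := by
          have h := congrArg (fun x => (inner ℝ w₀ x : ℝ)) hWcomb
          simp only [inner_sum, real_inner_smul_right, inner_zero_right] at h
          exact h.symm
        have hpos : ∃ j, 0 < W (Fin.castSucc j) := by
          by_contra hc
          push_neg at hc
          have : ∑ i, W (Fin.castSucc i) = 0 :=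
            le_antisymm (Finset.sum_nonpos fun i _ => hc i)
              (Finset.sum_nonneg fun i _ => hW₀ _)
          rw [this] at hWsum; norm_num at hWsum
        obtain ⟨j, hj⟩ := hpos
        have hlt : ∑ i, W i.castSucc * (inner ℝ w₀ (v i) : ℝ) < 0 := by
          have : ∑ i, W i.castSucc * (inner ℝ w₀ (v i) : ℝ)
              ≤ ∑ i : Fin n, (if i = j then W j.castSucc * (inner ℝ w₀ (v j) : ℝ) else 0) := by
            apply Finset.sum_le_sum
            intro i _
            split
            · subst ‹i = j›; exact le_rfl
            · exact mul_nonpos_of_nonneg_of_nonpos (hW₀ _) (hw₀ i).le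
          calc ∑ i, W i.castSucc * (inner ℝ w₀ (v i) : ℝ)
              ≤ _ := this
            _ = W j.castSucc * (inner ℝ w₀ (v j) : ℝ) := by simp
            _ < 0 := mul_neg_of_pos_of_neg hj (hw₀ j)
        rw [← hinner] at hlt; exact lt_irrefl 0 hlt
    -- separate 0 from the compact convex hull
    have hcompact : IsCompact (convexHull ℝ (Set.range g)) :=
      (Set.finite_range g).isCompact_convexHull (𝕜 := ℝ)
    obtain ⟨f, c, hfc, hc⟩ := geometric_hahn_banach_point_closed
      (convex_convexHull ℝ _) hcompact.isClosed h0
    set w := (InnerProductSpace.toDual ℝ (EuclideanSpace ℝ (Fin d))).symm f with hw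
    have hwf : ∀ x, (inner ℝ w x : ℝ) = f x := fun x => InnerProductSpace.toDual_symm_apply
    have hf0 : f 0 = 0 := map_zero f
    have hkey : ∀ x ∈ Set.range g, (0 : ℝ) < inner ℝ w x := by
      intro x hx
      rw [hwf]
      have := hc x (subset_convexHull ℝ _ hx)
      linarith [hfc, hf0 ▸ hfc]
    refine ⟨w, fun i => hkey (v i) ⟨i.castSucc, by simp [hg]⟩,
      hkey u ⟨Fin.last n, by simp [hg]⟩⟩
  · -- easy direction
    rintro ⟨w, hwv, hwu⟩ ⟨α, hα, hcomb⟩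
    have h1 : (inner ℝ w (-u) : ℝ) = -(inner ℝ w u : ℝ) := by rw [inner_neg_right]
    have h2 : (inner ℝ w (-u) : ℝ) = ∑ i, α i * (inner ℝ w (v i) : ℝ) := by
      rw [hcomb, inner_sum]
      exact Finset.sum_congr rfl fun i _ => real_inner_smul_right w (v i) (α i)
    have h3 : (0 : ℝ) ≤ ∑ i, α i * (inner ℝ w (v i) : ℝ) :=
      Finset.sum_nonneg fun i _ => mul_nonneg (hα i) (hwv i).le
    rw [h1] at h2
    linarith
end
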